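/- Let θ ∈ {1, 2}, a <_θ b in ℝ^(2), and f : [a,b]_θ → ℝ^(2) bounded. If P and P* are partitions of [a,b]_θ and P* is a refinement of P (P ⊆ P*), then L_θ(P,f) ≤_θ L_θ(P*,f) ≤_θ U_θ(P*,f) ≤_θ U_θ(P,f). -/

import Mathlib

open TrivSqZeroExt

noncomputable section

/-- The dual real number algebra `ℝ^(2)` (Mathlib's `DualNumber ℝ`). -/
abbrev D2 : Type := DualNumber ℝ

/-- The norm `‖x‖ = √(2 (Re x)² + (Ze x)²)` on the dual real numbers. -/
def dnorm (x : D2) : ℝ := Real.sqrt (2 * x.fst ^ 2 + x.snd ^ 2)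

/-- The type `θ` strict order `x >_θ y` (θ = 1 or θ = 2). -/
def dgt (θ : ℕ) (x y : D2) : Prop :=
  if θ = 1 then (y.fst < x.fst ∧ y.snd ≤ x.snd) ∨ (x.fst = y.fst ∧ y.snd < x.snd)
  else (y.fst < x.fst ∧ x.snd ≤ y.snd) ∨ (x.fst = y.fst ∧ x.snd < y.snd)

/-- `x ≥_θ y` means `x >_θ y` or `x = y`. -/
def dge (θ : ℕ) (x y : D2) : Prop := dgt θ x y ∨ x = y

/-- The type `θ` closed interval `[a, b]_θ`. -/
def dIcc (θ : ℕ) (a b : D2) : Set D2 := {x | dge θ x a ∧ dge θ b x}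

/-- The deleted type `θ` δ-neighborhood `N*_θ(c; δ)`. -/
def delNbd (θ : ℕ) (c : D2) (δ : ℝ) : Set D2 :=
  {x | 0 < dnorm (x - c) ∧ dnorm (x - c) < δ ∧ (dge θ x c ∨ dge θ c x)}

/-- A partition `a = x⁰ <_θ x¹ <_θ ⋯ <_θ xⁿ = b` of `[a, b]_θ`. -/
structure DPartition (θ : ℕ) (a b : D2) where
  n : ℕ
  npos : 0 < n
  x : ℕ → D2
  first : x 0 = a
  last : x n = b
  mono : ∀ i < n, dgt θ (x (i + 1)) (x i)

/-- The set of points of a partition. -/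
def DPartition.points {θ : ℕ} {a b : D2} (P : DPartition θ a b) : Set D2 :=
  P.x '' {i | i ≤ P.n}

/-- Supremum of the real component of `f` on `S`. -/
def reSup (f : D2 → D2) (S : Set D2) : ℝ := sSup ((fun x => (f x).fst) '' S)
/-- Infimum of the real component of `f` on `S`. -/
def reInf (f : D2 → D2) (S : Set D2) : ℝ := sInf ((fun x => (f x).fst) '' S)
/-- Supremum of the zero-divisor component of `f` on `S`. -/
def zeSup (f : D2 → D2) (S : Set D2) : ℝ := sSup ((fun x => (f x).snd) '' S)
/-- Infimum of the zero-divisor component of `f` on `S`. -/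
def zeInf (f : D2 → D2) (S : Set D2) : ℝ := sInf ((fun x => (f x).snd) '' S)

/-- The type `θ` upper sum `U_θ(P, f)`. -/
def upperSum (θ : ℕ) {a b : D2} (f : D2 → D2) (P : DPartition θ a b) : D2 :=
  ∑ i ∈ Finset.range P.n,
    (inl (reSup f (dIcc θ (P.x i) (P.x (i + 1)))) +
      inr (if θ = 1 then zeSup f (dIcc θ (P.x i) (P.x (i + 1)))
           else zeInf f (dIcc θ (P.x i) (P.x (i + 1))))) * (P.x (i + 1) - P.x i)

/-- The type `θ` lower sum `L_θ(P, f)`. -/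
def lowerSum (θ : ℕ) {a b : D2} (f : D2 → D2) (P : DPartition θ a b) : D2 :=
  ∑ i ∈ Finset.range P.n,
    (inl (reInf f (dIcc θ (P.x i) (P.x (i + 1)))) +
      inr (if θ = 1 then zeInf f (dIcc θ (P.x i) (P.x (i + 1)))
           else zeSup f (dIcc θ (P.x i) (P.x (i + 1))))) * (P.x (i + 1) - P.x i)

/-- The type `θ` lower integral of `f` on `[a, b]_θ`. -/
def lowerIntegral (θ : ℕ) (a b : D2) (f : D2 → D2) : D2 :=
  inl (sSup {r : ℝ | ∃ P : DPartition θ a b, (lowerSum θ f P).fst = r}) +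
  inr (if θ = 1 then sSup {r : ℝ | ∃ P : DPartition θ a b, (lowerSum θ f P).snd = r}
       else sInf {r : ℝ | ∃ P : DPartition θ a b, (lowerSum θ f P).snd = r})

/-- The type `θ` upper integral of `f` on `[a, b]_θ`. -/
def upperIntegral (θ : ℕ) (a b : D2) (f : D2 → D2) : D2 :=
  inl (sInf {r : ℝ | ∃ P : DPartition θ a b, (upperSum θ f P).fst = r}) +
  inr (if θ = 1 then sInf {r : ℝ | ∃ P : DPartition θ a b, (upperSum θ f P).snd = r}
       else sSup {r : ℝ | ∃ P : DPartition θ a b, (upperSum θ f P).snd = r})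

/-- `f` is type `θ` integrable on `[a, b]_θ`. -/
def DIntegrableOn (θ : ℕ) (a b : D2) (f : D2 → D2) : Prop :=
  lowerIntegral θ a b f = upperIntegral θ a b f

/-- The type `θ` integral `∫_a^b f d_θx` (the common value of the lower and upper integrals). -/
def dintegral (θ : ℕ) (a b : D2) (f : D2 → D2) : D2 := lowerIntegral θ a b f

/-- `f` is bounded on `S`: both real components are bounded. -/
def BddOn (f : D2 → D2) (S : Set D2) : Prop :=
  (∃ M : ℝ, ∀ x ∈ S, |(f x).fst| ≤ M) ∧ ∃ M : ℝ, ∀ x ∈ S, |(f x).snd| ≤ M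

/-- `f` is differentiable (dual number sense) at `c` relative to `S`, with derivative `L`. -/
def HasDDerivWithin (S : Set D2) (f : D2 → D2) (c L : D2) : Prop :=
  ∀ ε : ℝ, 0 < ε → ∃ δ : ℝ, 0 < δ ∧ ∀ x ∈ S, 0 < dnorm (x - c) → dnorm (x - c) < δ →
    dnorm (f x - f c - L * (x - c)) / dnorm (x - c) < ε

/-- `f : D → ℝ^(2)` is type `θ` differentiable at `c` with type `θ` derivative `L`. -/
def HasTypeDerivAt (θ : ℕ) (D : Set D2) (f : D2 → D2) (c L : D2) : Prop :=
  ∀ ε : ℝ, 0 < ε → ∃ δ : ℝ, 0 < δ ∧ delNbd θ c δ ⊆ D ∧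
    ∀ x ∈ delNbd θ c δ, dnorm (f x - f c - L * (x - c)) / dnorm (x - c) < ε

/-- `f` is type `θ` differentiable at `c` relative to `S`, with type `θ` derivative `L`. -/
def HasTypeDerivWithin (θ : ℕ) (S : Set D2) (f : D2 → D2) (c L : D2) : Prop :=
  ∀ ε : ℝ, 0 < ε → ∃ δ : ℝ, 0 < δ ∧
    ∀ x ∈ delNbd θ c δ ∩ S, dnorm (f x - f c - L * (x - c)) / dnorm (x - c) < ε
namespace SumsRefAux

lemma dge_refl (θ : ℕ) (x : D2) : dge θ x x := Or.inr rfl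

lemma dge1_iff (x y : D2) : dge 1 x y ↔ y.fst ≤ x.fst ∧ y.snd ≤ x.snd := by
  unfold dge dgt
  simp only [if_pos rfl]
  constructor
  · rintro ((⟨h1, h2⟩ | ⟨h1, h2⟩) | rfl)
    · exact ⟨h1.le, h2⟩
    · exact ⟨h1.ge, h2.le⟩
    · exact ⟨le_rfl, le_rfl⟩
  · rintro ⟨h1, h2⟩
    rcases eq_or_lt_of_le h1 with he | hl
    · rcases eq_or_lt_of_le h2 with he2 | hl2
      · exact Or.inr (TrivSqZeroExt.ext he.symm he2.symm)
      · exact Or.inl (Or.inr ⟨he.symm, hl2⟩)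
    · exact Or.inl (Or.inl ⟨hl, h2⟩)

lemma dge2_iff (x y : D2) : dge 2 x y ↔ y.fst ≤ x.fst ∧ x.snd ≤ y.snd := by
  unfold dge dgt
  rw [if_neg (by norm_num)]
  constructor
  · rintro ((⟨h1, h2⟩ | ⟨h1, h2⟩) | rfl)
    · exact ⟨h1.le, h2⟩
    · exact ⟨h1.ge, h2.le⟩
    · exact ⟨le_rfl, le_rfl⟩
  · rintro ⟨h1, h2⟩
    rcases eq_or_lt_of_le h1 with he | hl
    · rcases eq_or_lt_of_le h2 with he2 | hl2
      · exact Or.inr (TrivSqZeroExt.ext he.symm he2)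
      · exact Or.inl (Or.inr ⟨he.symm, hl2⟩)
    · exact Or.inl (Or.inl ⟨hl, h2⟩)

variable {θ : ℕ}

lemma dgt_iff (hθ : θ = 1 ∨ θ = 2) (x y : D2) :
    dgt θ x y ↔ dge θ x y ∧ x ≠ y := by
  constructor
  · intro h
    refine ⟨Or.inl h, ?_⟩
    rintro rfl
    rcases hθ with rfl | rfl
    · unfold dgt at h
      rw [if_pos rfl] at h
      rcases h with ⟨h1, _⟩ | ⟨_, h2⟩
      · exact lt_irrefl _ h1
      · exact lt_irrefl _ h2
    · unfold dgt at h
      rw [if_neg (by norm_num)] at h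
      rcases h with ⟨h1, _⟩ | ⟨_, h2⟩
      · exact lt_irrefl _ h1
      · exact lt_irrefl _ h2
  · rintro ⟨hge, hne⟩
    rcases hθ with rfl | rfl
    · rw [dge1_iff] at hge
      unfold dgt
      rw [if_pos rfl]
      rcases eq_or_lt_of_le hge.1 with he | hl
      · rcases eq_or_lt_of_le hge.2 with he2 | hl2
        · exact absurd (TrivSqZeroExt.ext he.symm he2.symm) hne
        · exact Or.inr ⟨he.symm, hl2⟩
      · exact Or.inl ⟨hl, hge.2⟩
    · rw [dge2_iff] at hge
      unfold dgt
      rw [if_neg (by norm_num)]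
      rcases eq_or_lt_of_le hge.1 with he | hl
      · rcases eq_or_lt_of_le hge.2 with he2 | hl2
        · exact absurd (TrivSqZeroExt.ext he.symm he2) hne
        · exact Or.inr ⟨he.symm, hl2⟩
      · exact Or.inl ⟨hl, hge.2⟩

lemma dge_of_dgt (h : dgt θ x y) : dge θ x y := Or.inl h

lemma dge_trans (hθ : θ = 1 ∨ θ = 2) {x y z : D2}
    (h1 : dge θ x y) (h2 : dge θ y z) : dge θ x z := by
  rcases hθ with rfl | rfl
  · rw [dge1_iff] at *
    exact ⟨le_trans h2.1 h1.1, le_trans h2.2 h1.2⟩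
  · rw [dge2_iff] at *
    exact ⟨le_trans h2.1 h1.1, le_trans h1.2 h2.2⟩

lemma dge_antisymm (hθ : θ = 1 ∨ θ = 2) {x y : D2}
    (h1 : dge θ x y) (h2 : dge θ y x) : x = y := by
  rcases hθ with rfl | rfl
  · rw [dge1_iff] at *
    exact TrivSqZeroExt.ext (le_antisymm h2.1 h1.1) (le_antisymm h2.2 h1.2)
  · rw [dge2_iff] at *
    exact TrivSqZeroExt.ext (le_antisymm h2.1 h1.1) (le_antisymm h1.2 h2.2)

lemma dgt_of_dge_of_dgt (hθ : θ = 1 ∨ θ = 2) {x y z : D2}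
    (h1 : dge θ x y) (h2 : dgt θ y z) : dgt θ x z := by
  rw [dgt_iff hθ] at *
  refine ⟨dge_trans hθ h1 h2.1, ?_⟩
  rintro rfl
  exact h2.2 (dge_antisymm hθ h2.1 h1)

lemma dge_fst (hθ : θ = 1 ∨ θ = 2) {x y : D2} (h : dge θ x y) : y.fst ≤ x.fst := by
  rcases hθ with rfl | rfl
  · exact ((dge1_iff x y).1 h).1
  · exact ((dge2_iff x y).1 h).1

-- interval lemmas
lemma dIcc_mono (hθ : θ = 1 ∨ θ = 2) {u v u' v' : D2}
    (h1 : dge θ u' u) (h2 : dge θ v v') : dIcc θ u' v' ⊆ dIcc θ u v := by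
  rintro z ⟨hz1, hz2⟩
  exact ⟨dge_trans hθ hz1 h1, dge_trans hθ h2 hz2⟩

lemma left_mem_dIcc {u v : D2} (h : dge θ v u) : u ∈ dIcc θ u v :=
  ⟨dge_refl θ u, h⟩

-- partition chain lemmas
lemma chain (hθ : θ = 1 ∨ θ = 2) {a b : D2} (P : DPartition θ a b) :
    ∀ j, j ≤ P.n → ∀ i, i ≤ j → dge θ (P.x j) (P.x i) := by
  intro j
  induction j with
  | zero =>
    intro _ i hi
    rw [Nat.le_zero] at hi
    subst hi
    exact dge_refl θ _
  | succ j ih =>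
    intro hj i hi
    rcases Nat.lt_or_ge i (j+1) with h | h
    · have hij : i ≤ j := Nat.lt_succ_iff.mp h
      exact dge_trans hθ (dge_of_dgt (P.mono j (Nat.lt_of_succ_le hj)))
        (ih (Nat.le_of_succ_le hj) i hij)
    · have : i = j + 1 := le_antisymm hi h
      subst this
      exact dge_refl θ _

lemma chain_strict (hθ : θ = 1 ∨ θ = 2) {a b : D2} (P : DPartition θ a b)
    {i j : ℕ} (hij : i < j) (hj : j ≤ P.n) : dgt θ (P.x j) (P.x i) :=
  dgt_of_dge_of_dgt hθ (chain hθ P j hj (i+1) hij)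
    (P.mono i (lt_of_lt_of_le hij hj))

lemma sub_dIcc (hθ : θ = 1 ∨ θ = 2) {a b : D2} (P : DPartition θ a b)
    {i : ℕ} (hi : i < P.n) : dIcc θ (P.x i) (P.x (i+1)) ⊆ dIcc θ a b := by
  apply dIcc_mono hθ
  · have h := chain hθ P i (le_of_lt hi) 0 (Nat.zero_le _)
    rwa [P.first] at h
  · have h := chain hθ P P.n le_rfl (i+1) hi
    rwa [P.last] at h

-- bounds
lemma bddBelow_image {a b : D2} (φ : D2 → ℝ) (M : ℝ)
    (hM : ∀ x ∈ dIcc θ a b, |φ x| ≤ M) {S : Set D2} (hS : S ⊆ dIcc θ a b) :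
    BddBelow (φ '' S) := by
  refine ⟨-M, ?_⟩
  rintro r ⟨x, hx, rfl⟩
  exact neg_le_of_abs_le (hM x (hS hx))

lemma bddAbove_image {a b : D2} (φ : D2 → ℝ) (M : ℝ)
    (hM : ∀ x ∈ dIcc θ a b, |φ x| ≤ M) {S : Set D2} (hS : S ⊆ dIcc θ a b) :
    BddAbove (φ '' S) := by
  refine ⟨M, ?_⟩
  rintro r ⟨x, hx, rfl⟩
  exact le_of_abs_le (hM x (hS hx))

end SumsRefAux

namespace SumsRefAux

variable {θ : ℕ}

lemma master (hθ : θ = 1 ∨ θ = 2) {a b : D2} (P Q : DPartition θ a b)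
    (href : P.points ⊆ Q.points)
    (c : D2 → D2 → ℝ)
    (hc : ∀ u v u' v', dge θ u' u → dgt θ v' u' → dge θ v v' →
          dge θ u a → dge θ b v → c u v ≤ c u' v')
    (W : D2 → ℝ) (hW : ∀ u v : D2, dgt θ v u → 0 ≤ W v - W u) :
    ∑ i ∈ Finset.range P.n, c (P.x i) (P.x (i+1)) * (W (P.x (i+1)) - W (P.x i)) ≤
    ∑ j ∈ Finset.range Q.n, c (Q.x j) (Q.x (j+1)) * (W (Q.x (j+1)) - W (Q.x j)) := by
  have hex : ∀ i, ∃ j, i ≤ P.n → (j ≤ Q.n ∧ Q.x j = P.x i) := by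
    intro i
    by_cases hi : i ≤ P.n
    · obtain ⟨j, hj, hje⟩ := href ⟨i, hi, rfl⟩
      exact ⟨j, fun _ => ⟨hj, hje⟩⟩
    · exact ⟨0, fun h => absurd h hi⟩
  choose σ hσ using hex
  have hQx : ∀ i, i ≤ P.n → Q.x (σ i) = P.x i := fun i hi => (hσ i hi).2
  have hσle : ∀ i, i ≤ P.n → σ i ≤ Q.n := fun i hi => (hσ i hi).1
  have hσmono : ∀ i i', i < i' → i' ≤ P.n → σ i < σ i' := by
    intro i i' hii hi'
    by_contra hcon
    push_neg at hcon
    have h1 : dgt θ (P.x i') (P.x i) := chain_strict hθ P hii hi'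
    rw [← hQx i (le_trans hii.le hi'), ← hQx i' hi'] at h1
    have h2 : dge θ (Q.x (σ i)) (Q.x (σ i')) :=
      chain hθ Q (σ i) (hσle i (le_trans hii.le hi')) (σ i') hcon
    rw [dgt_iff hθ] at h1
    exact h1.2 (dge_antisymm hθ h1.1 h2)
  have hσ0 : σ 0 = 0 := by
    by_contra h0
    have hpos : 0 < σ 0 := Nat.pos_of_ne_zero h0
    have h := chain_strict hθ Q hpos (hσle 0 (Nat.zero_le _))
    rw [hQx 0 (Nat.zero_le _), P.first, Q.first] at h
    rw [dgt_iff hθ] at h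
    exact h.2 rfl
  have hσn : σ P.n = Q.n := by
    rcases eq_or_lt_of_le (hσle P.n le_rfl) with h | h
    · exact h
    · exfalso
      have hh := chain_strict hθ Q h le_rfl
      rw [hQx P.n le_rfl, P.last, Q.last] at hh
      rw [dgt_iff hθ] at hh
      exact hh.2 rfl
  have key : ∀ i, i ≤ P.n →
      ∑ i' ∈ Finset.range i, c (P.x i') (P.x (i'+1)) * (W (P.x (i'+1)) - W (P.x i')) ≤
      ∑ j ∈ Finset.range (σ i), c (Q.x j) (Q.x (j+1)) * (W (Q.x (j+1)) - W (Q.x j)) := by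
    intro i
    induction i with
    | zero => intro _; simp [hσ0]
    | succ i ih =>
      intro hi
      have hi' : i ≤ P.n := Nat.le_of_succ_le hi
      have hσlt : σ i < σ (i+1) := hσmono i (i+1) (Nat.lt_succ_self i) hi
      rw [Finset.sum_range_succ,
        ← Finset.sum_range_add_sum_Ico
          (fun j => c (Q.x j) (Q.x (j+1)) * (W (Q.x (j+1)) - W (Q.x j))) hσlt.le]
      refine add_le_add (ih hi') ?_
      have tele : ∑ j ∈ Finset.Ico (σ i) (σ (i+1)), (W (Q.x (j+1)) - W (Q.x j))
          = W (P.x (i+1)) - W (P.x i) := by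
        rw [Finset.sum_Ico_eq_sub _ hσlt.le, Finset.sum_range_sub (fun j => W (Q.x j)),
          Finset.sum_range_sub (fun j => W (Q.x j)), hQx (i+1) hi, hQx i hi']
        ring
      calc c (P.x i) (P.x (i+1)) * (W (P.x (i+1)) - W (P.x i))
          = ∑ j ∈ Finset.Ico (σ i) (σ (i+1)),
              c (P.x i) (P.x (i+1)) * (W (Q.x (j+1)) - W (Q.x j)) := by
            rw [← Finset.mul_sum, tele]
        _ ≤ ∑ j ∈ Finset.Ico (σ i) (σ (i+1)),
              c (Q.x j) (Q.x (j+1)) * (W (Q.x (j+1)) - W (Q.x j)) := by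
            apply Finset.sum_le_sum
            intro j hj
            rw [Finset.mem_Ico] at hj
            have hjQ : j < Q.n := lt_of_lt_of_le hj.2 (hσle (i+1) hi)
            have hQmono : dgt θ (Q.x (j+1)) (Q.x j) := Q.mono j hjQ
            apply mul_le_mul_of_nonneg_right _ (hW _ _ hQmono)
            apply hc
            · rw [← hQx i hi']
              exact chain hθ Q j hjQ.le (σ i) hj.1
            · exact hQmono
            · rw [← hQx (i+1) hi]
              exact chain hθ Q (σ (i+1)) (hσle (i+1) hi) (j+1) hj.2
            · have hh := chain hθ P i hi' 0 (Nat.zero_le _)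
              rwa [P.first] at hh
            · have hh := chain hθ P P.n le_rfl (i+1) hi
              rwa [P.last] at hh
  have h := key P.n le_rfl
  rwa [hσn] at h

end SumsRefAux

namespace SumsRefAux

variable {θ : ℕ}

lemma master_inf (hθ : θ = 1 ∨ θ = 2) {a b : D2} (P Q : DPartition θ a b)
    (href : P.points ⊆ Q.points) (φ : D2 → ℝ) (M : ℝ)
    (hM : ∀ x ∈ dIcc θ a b, |φ x| ≤ M)
    (W : D2 → ℝ) (hW : ∀ u v : D2, dgt θ v u → 0 ≤ W v - W u) :
    ∑ i ∈ Finset.range P.n,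
      sInf (φ '' dIcc θ (P.x i) (P.x (i+1))) * (W (P.x (i+1)) - W (P.x i)) ≤
    ∑ j ∈ Finset.range Q.n,
      sInf (φ '' dIcc θ (Q.x j) (Q.x (j+1))) * (W (Q.x (j+1)) - W (Q.x j)) := by
  refine master hθ P Q href (fun u v => sInf (φ '' dIcc θ u v)) ?_ W hW
  intro u v u' v' h1 h2 h3 h4 h5
  have hsub : dIcc θ u' v' ⊆ dIcc θ u v := dIcc_mono hθ h1 h3
  have houter : dIcc θ u v ⊆ dIcc θ a b := dIcc_mono hθ h4 h5
  refine csInf_le_csInf (bddBelow_image φ M hM houter) ?_ (Set.image_mono hsub)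
  exact ⟨φ u', Set.mem_image_of_mem φ (left_mem_dIcc (dge_of_dgt h2))⟩

lemma master_sup (hθ : θ = 1 ∨ θ = 2) {a b : D2} (P Q : DPartition θ a b)
    (href : P.points ⊆ Q.points) (φ : D2 → ℝ) (M : ℝ)
    (hM : ∀ x ∈ dIcc θ a b, |φ x| ≤ M)
    (W : D2 → ℝ) (hW : ∀ u v : D2, dgt θ v u → 0 ≤ W v - W u) :
    ∑ j ∈ Finset.range Q.n,
      sSup (φ '' dIcc θ (Q.x j) (Q.x (j+1))) * (W (Q.x (j+1)) - W (Q.x j)) ≤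
    ∑ i ∈ Finset.range P.n,
      sSup (φ '' dIcc θ (P.x i) (P.x (i+1))) * (W (P.x (i+1)) - W (P.x i)) := by
  have h := master hθ P Q href (fun u v => -sSup (φ '' dIcc θ u v)) ?_ W hW
  · have e : ∀ (R : DPartition θ a b),
        ∑ i ∈ Finset.range R.n,
          (-sSup (φ '' dIcc θ (R.x i) (R.x (i+1)))) * (W (R.x (i+1)) - W (R.x i))
        = -∑ i ∈ Finset.range R.n,
            sSup (φ '' dIcc θ (R.x i) (R.x (i+1))) * (W (R.x (i+1)) - W (R.x i)) := by
      intro R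
      rw [← Finset.sum_neg_distrib]
      exact Finset.sum_congr rfl fun i _ => by ring
    rw [e P, e Q] at h
    linarith
  · intro u v u' v' h1 h2 h3 h4 h5
    have hsub : dIcc θ u' v' ⊆ dIcc θ u v := dIcc_mono hθ h1 h3
    have houter : dIcc θ u v ⊆ dIcc θ a b := dIcc_mono hθ h4 h5
    simp only [neg_le_neg_iff]
    refine csSup_le_csSup (bddAbove_image φ M hM houter) ?_ (Set.image_mono hsub)
    exact ⟨φ u', Set.mem_image_of_mem φ (left_mem_dIcc (dge_of_dgt h2))⟩

/-- negative-weight variant of `master_inf`, for `W = -snd`. -/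
lemma master_inf_neg (hθ : θ = 1 ∨ θ = 2) {a b : D2} (P Q : DPartition θ a b)
    (href : P.points ⊆ Q.points) (φ : D2 → ℝ) (M : ℝ)
    (hM : ∀ x ∈ dIcc θ a b, |φ x| ≤ M)
    (hW : ∀ u v : D2, dgt θ v u → 0 ≤ (-v.snd) - (-u.snd)) :
    ∑ j ∈ Finset.range Q.n,
      sInf (φ '' dIcc θ (Q.x j) (Q.x (j+1))) * ((Q.x (j+1)).snd - (Q.x j).snd) ≤
    ∑ i ∈ Finset.range P.n,
      sInf (φ '' dIcc θ (P.x i) (P.x (i+1))) * ((P.x (i+1)).snd - (P.x i).snd) := by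
  have h := master_inf hθ P Q href φ M hM (fun z => -z.snd) hW
  have e : ∀ (R : DPartition θ a b),
      ∑ i ∈ Finset.range R.n,
        sInf (φ '' dIcc θ (R.x i) (R.x (i+1))) * (-(R.x (i+1)).snd - -(R.x i).snd)
      = -∑ i ∈ Finset.range R.n,
          sInf (φ '' dIcc θ (R.x i) (R.x (i+1))) * ((R.x (i+1)).snd - (R.x i).snd) := by
    intro R
    rw [← Finset.sum_neg_distrib]
    exact Finset.sum_congr rfl fun i _ => by ring
  rw [e P, e Q] at h
  linarith

/-- negative-weight variant of `master_sup`, for `W = -snd`. -/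
lemma master_sup_neg (hθ : θ = 1 ∨ θ = 2) {a b : D2} (P Q : DPartition θ a b)
    (href : P.points ⊆ Q.points) (φ : D2 → ℝ) (M : ℝ)
    (hM : ∀ x ∈ dIcc θ a b, |φ x| ≤ M)
    (hW : ∀ u v : D2, dgt θ v u → 0 ≤ (-v.snd) - (-u.snd)) :
    ∑ i ∈ Finset.range P.n,
      sSup (φ '' dIcc θ (P.x i) (P.x (i+1))) * ((P.x (i+1)).snd - (P.x i).snd) ≤
    ∑ j ∈ Finset.range Q.n,
      sSup (φ '' dIcc θ (Q.x j) (Q.x (j+1))) * ((Q.x (j+1)).snd - (Q.x j).snd) := by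
  have h := master_sup hθ P Q href φ M hM (fun z => -z.snd) hW
  have e : ∀ (R : DPartition θ a b),
      ∑ i ∈ Finset.range R.n,
        sSup (φ '' dIcc θ (R.x i) (R.x (i+1))) * (-(R.x (i+1)).snd - -(R.x i).snd)
      = -∑ i ∈ Finset.range R.n,
          sSup (φ '' dIcc θ (R.x i) (R.x (i+1))) * ((R.x (i+1)).snd - (R.x i).snd) := by
    intro R
    rw [← Finset.sum_neg_distrib]
    exact Finset.sum_congr rfl fun i _ => by ring
  rw [e P, e Q] at h
  linarith

lemma inf_le_sup_aux (hθ : θ = 1 ∨ θ = 2) {a b : D2} (Q : DPartition θ a b)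
    (φ : D2 → ℝ) (M : ℝ) (hM : ∀ x ∈ dIcc θ a b, |φ x| ≤ M)
    {i : ℕ} (hi : i < Q.n) :
    sInf (φ '' dIcc θ (Q.x i) (Q.x (i+1))) ≤ sSup (φ '' dIcc θ (Q.x i) (Q.x (i+1))) :=
  csInf_le_csSup (hb := bddBelow_image φ M hM (sub_dIcc hθ Q hi))
    (ha := bddAbove_image φ M hM (sub_dIcc hθ Q hi))
    (ne := ⟨φ (Q.x i), Set.mem_image_of_mem φ (left_mem_dIcc (dge_of_dgt (Q.mono i hi)))⟩)

-- component formulas for the sums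
lemma term_fst (r s : ℝ) (u v : D2) :
    ((inl r + inr s) * (u - v)).fst = r * (u.fst - v.fst) := by simp

lemma term_snd (r s : ℝ) (u v : D2) :
    ((inl r + inr s) * (u - v)).snd = r * (u.snd - v.snd) + s * (u.fst - v.fst) := by
  simp [TrivSqZeroExt.snd_mul, mul_comm]
  ring

lemma lowerSum_fst {a b : D2} (f : D2 → D2) (P : DPartition θ a b) :
    (lowerSum θ f P).fst = ∑ i ∈ Finset.range P.n,
      sInf ((fun x => (f x).fst) '' dIcc θ (P.x i) (P.x (i+1))) * ((P.x (i+1)).fst - (P.x i).fst) := by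
  rw [lowerSum, fst_sum]
  exact Finset.sum_congr rfl fun i _ => term_fst _ _ _ _

lemma lowerSum_snd {a b : D2} (f : D2 → D2) (P : DPartition θ a b) :
    (lowerSum θ f P).snd = ∑ i ∈ Finset.range P.n,
      (sInf ((fun x => (f x).fst) '' dIcc θ (P.x i) (P.x (i+1))) * ((P.x (i+1)).snd - (P.x i).snd) +
       (if θ = 1 then sInf ((fun x => (f x).snd) '' dIcc θ (P.x i) (P.x (i+1)))
        else sSup ((fun x => (f x).snd) '' dIcc θ (P.x i) (P.x (i+1)))) * ((P.x (i+1)).fst - (P.x i).fst)) := by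
  rw [lowerSum, snd_sum]
  exact Finset.sum_congr rfl fun i _ => term_snd _ _ _ _

lemma upperSum_fst {a b : D2} (f : D2 → D2) (P : DPartition θ a b) :
    (upperSum θ f P).fst = ∑ i ∈ Finset.range P.n,
      sSup ((fun x => (f x).fst) '' dIcc θ (P.x i) (P.x (i+1))) * ((P.x (i+1)).fst - (P.x i).fst) := by
  rw [upperSum, fst_sum]
  exact Finset.sum_congr rfl fun i _ => term_fst _ _ _ _

lemma upperSum_snd {a b : D2} (f : D2 → D2) (P : DPartition θ a b) :
    (upperSum θ f P).snd = ∑ i ∈ Finset.range P.n,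
      (sSup ((fun x => (f x).fst) '' dIcc θ (P.x i) (P.x (i+1))) * ((P.x (i+1)).snd - (P.x i).snd) +
       (if θ = 1 then sSup ((fun x => (f x).snd) '' dIcc θ (P.x i) (P.x (i+1)))
        else sInf ((fun x => (f x).snd) '' dIcc θ (P.x i) (P.x (i+1)))) * ((P.x (i+1)).fst - (P.x i).fst)) := by
  rw [upperSum, snd_sum]
  exact Finset.sum_congr rfl fun i _ => term_snd _ _ _ _

end SumsRefAux

open SumsRefAux in
/-- refining a partition raises lower sums and lowers upper sums:
`L_θ(P,f) ≤_θ L_θ(P*,f) ≤_θ U_θ(P*,f) ≤_θ U_θ(P,f)`. -/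
theorem sums_refinement (θ : ℕ) (hθ : θ = 1 ∨ θ = 2) (a b : D2) (hab : dgt θ b a)
    (f : D2 → D2) (hf : BddOn f (dIcc θ a b))
    (P Pstar : DPartition θ a b) (href : P.points ⊆ Pstar.points) :
    dge θ (lowerSum θ f Pstar) (lowerSum θ f P) ∧
    dge θ (upperSum θ f Pstar) (lowerSum θ f Pstar) ∧
    dge θ (upperSum θ f P) (upperSum θ f Pstar) := by
  obtain ⟨⟨MR, hMR⟩, ⟨MZ, hMZ⟩⟩ := hf
  have hMR' : ∀ x ∈ dIcc θ a b, |(fun y => (f y).fst) x| ≤ MR := hMR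
  have hMZ' : ∀ x ∈ dIcc θ a b, |(fun y => (f y).snd) x| ≤ MZ := hMZ
  have hWfst : ∀ u v : D2, dgt θ v u → 0 ≤ v.fst - u.fst :=
    fun u v h => sub_nonneg.2 (dge_fst hθ (dge_of_dgt h))
  rcases hθ with hθ1 | hθ2
  · subst hθ1
    have hθ : (1:ℕ) = 1 ∨ (1:ℕ) = 2 := Or.inl rfl
    have hWsnd : ∀ u v : D2, dgt 1 v u → 0 ≤ v.snd - u.snd := by
      intro u v h
      have h2 := ((dge1_iff v u).1 (dge_of_dgt h)).2
      linarith
    refine ⟨?_, ?_, ?_⟩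
    · rw [dge1_iff, lowerSum_fst f Pstar, lowerSum_fst f P,
        lowerSum_snd f Pstar, lowerSum_snd f P]
      simp only [reduceIte]
      constructor
      · exact master_inf hθ P Pstar href (fun y => (f y).fst) MR hMR'
          (fun z => z.fst) hWfst
      · rw [Finset.sum_add_distrib, Finset.sum_add_distrib]
        exact add_le_add
          (master_inf hθ P Pstar href (fun y => (f y).fst) MR hMR'
            (fun z => z.snd) hWsnd)
          (master_inf hθ P Pstar href (fun y => (f y).snd) MZ hMZ'
            (fun z => z.fst) hWfst)
    · rw [dge1_iff, upperSum_fst f Pstar, lowerSum_fst f Pstar,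
        upperSum_snd f Pstar, lowerSum_snd f Pstar]
      simp only [reduceIte]
      constructor
      · refine Finset.sum_le_sum fun i hi => ?_
        rw [Finset.mem_range] at hi
        exact mul_le_mul_of_nonneg_right
          (inf_le_sup_aux hθ Pstar (fun y => (f y).fst) MR hMR' hi)
          (hWfst _ _ (Pstar.mono i hi))
      · refine Finset.sum_le_sum fun i hi => ?_
        rw [Finset.mem_range] at hi
        exact add_le_add
          (mul_le_mul_of_nonneg_right
            (inf_le_sup_aux hθ Pstar (fun y => (f y).fst) MR hMR' hi)
            (hWsnd _ _ (Pstar.mono i hi)))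
          (mul_le_mul_of_nonneg_right
            (inf_le_sup_aux hθ Pstar (fun y => (f y).snd) MZ hMZ' hi)
            (hWfst _ _ (Pstar.mono i hi)))
    · rw [dge1_iff, upperSum_fst f Pstar, upperSum_fst f P,
        upperSum_snd f Pstar, upperSum_snd f P]
      simp only [reduceIte]
      constructor
      · exact master_sup hθ P Pstar href (fun y => (f y).fst) MR hMR'
          (fun z => z.fst) hWfst
      · rw [Finset.sum_add_distrib, Finset.sum_add_distrib]
        exact add_le_add
          (master_sup hθ P Pstar href (fun y => (f y).fst) MR hMR'
            (fun z => z.snd) hWsnd)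
          (master_sup hθ P Pstar href (fun y => (f y).snd) MZ hMZ'
            (fun z => z.fst) hWfst)
  · subst hθ2
    have hθ : (2:ℕ) = 1 ∨ (2:ℕ) = 2 := Or.inr rfl
    have hWsnd : ∀ u v : D2, dgt 2 v u → 0 ≤ (-v.snd) - (-u.snd) := by
      intro u v h
      have h2 := ((dge2_iff v u).1 (dge_of_dgt h)).2
      linarith
    have hsndle : ∀ u v : D2, dgt 2 v u → v.snd - u.snd ≤ 0 := by
      intro u v h
      have h2 := ((dge2_iff v u).1 (dge_of_dgt h)).2
      linarith
    refine ⟨?_, ?_, ?_⟩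
    · rw [dge2_iff, lowerSum_fst f Pstar, lowerSum_fst f P,
        lowerSum_snd f Pstar, lowerSum_snd f P]
      simp only [if_neg (by norm_num : ¬(2:ℕ) = 1)]
      constructor
      · exact master_inf hθ P Pstar href (fun y => (f y).fst) MR hMR'
          (fun z => z.fst) hWfst
      · rw [Finset.sum_add_distrib, Finset.sum_add_distrib]
        exact add_le_add
          (master_inf_neg hθ P Pstar href (fun y => (f y).fst) MR hMR' hWsnd)
          (master_sup hθ P Pstar href (fun y => (f y).snd) MZ hMZ'
            (fun z => z.fst) hWfst)
    · rw [dge2_iff, upperSum_fst f Pstar, lowerSum_fst f Pstar,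
        upperSum_snd f Pstar, lowerSum_snd f Pstar]
      simp only [if_neg (by norm_num : ¬(2:ℕ) = 1)]
      constructor
      · refine Finset.sum_le_sum fun i hi => ?_
        rw [Finset.mem_range] at hi
        exact mul_le_mul_of_nonneg_right
          (inf_le_sup_aux hθ Pstar (fun y => (f y).fst) MR hMR' hi)
          (hWfst _ _ (Pstar.mono i hi))
      · refine Finset.sum_le_sum fun i hi => ?_
        rw [Finset.mem_range] at hi
        exact add_le_add
          (mul_le_mul_of_nonpos_right
            (inf_le_sup_aux hθ Pstar (fun y => (f y).fst) MR hMR' hi)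
            (hsndle _ _ (Pstar.mono i hi)))
          (mul_le_mul_of_nonneg_right
            (inf_le_sup_aux hθ Pstar (fun y => (f y).snd) MZ hMZ' hi)
            (hWfst _ _ (Pstar.mono i hi)))
    · rw [dge2_iff, upperSum_fst f Pstar, upperSum_fst f P,
        upperSum_snd f Pstar, upperSum_snd f P]
      simp only [if_neg (by norm_num : ¬(2:ℕ) = 1)]
      constructor
      · exact master_sup hθ P Pstar href (fun y => (f y).fst) MR hMR'
          (fun z => z.fst) hWfst
      · rw [Finset.sum_add_distrib, Finset.sum_add_distrib]
        exact add_le_add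
          (master_sup_neg hθ P Pstar href (fun y => (f y).fst) MR hMR' hWsnd)
          (master_inf hθ P Pstar href (fun y => (f y).snd) MZ hMZ'
            (fun z => z.fst) hWfst)
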